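/- For every fixed t with 0 ≤ t < 4, the function p ↦ exp( p·t + p·(1−p)·t²/2 ) − ( (1−p) + p·exp(t) ) is concave on the interval [1/2,1]; equivalently, its second derivative in p, which equals (1/4)·exp( p·t·(2 + t − p·t)/2 )·(2p−1)·t³·( (2p−1)·t − 4 ), is non-positive on [1/2,1]. -/

import Mathlib

open Real

private lemma hd1 (t p : ℝ) :
    HasDerivAt (fun p : ℝ => Real.exp (p*t + p*(1 - p)*t^2/2) - ((1 - p) + p * Real.exp t))
      (Real.exp (p*t + p*(1 - p)*t^2/2) * (t + (1 - 2*p)*t^2/2) - (Real.exp t - 1)) p := by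
  have hg : HasDerivAt (fun p : ℝ => p*t + p*(1 - p)*t^2/2) (t + (1 - 2*p)*t^2/2) p := by
    have h1 : HasDerivAt (fun p : ℝ => p*t) t p := by simpa using (hasDerivAt_id p).mul_const t
    have h2 : HasDerivAt (fun p : ℝ => p*(1 - p)) (1 - 2*p) p := by
      have := (hasDerivAt_id p).mul ((hasDerivAt_const p (1:ℝ)).sub (hasDerivAt_id p))
      refine this.congr_deriv ?_
      simp only [id_eq, Pi.sub_apply]
      ring
    have h3 := (h2.mul_const (t^2)).div_const 2
    exact h1.add h3
  have hlin : HasDerivAt (fun p : ℝ => (1 - p) + p * Real.exp t) (-1 + Real.exp t) p := by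
    have := ((hasDerivAt_const p (1:ℝ)).sub (hasDerivAt_id p)).add
      ((hasDerivAt_id p).mul_const (Real.exp t))
    refine this.congr_deriv ?_
    ring
  have := (hg.exp).sub hlin
  refine this.congr_deriv ?_
  ring

private lemma hd2 (t p : ℝ) :
    HasDerivAt (fun p : ℝ => Real.exp (p*t + p*(1 - p)*t^2/2) * (t + (1 - 2*p)*t^2/2)
        - (Real.exp t - 1))
      (Real.exp (p*t + p*(1 - p)*t^2/2) * ((t + (1 - 2*p)*t^2/2)^2 - t^2)) p := by
  have hg : HasDerivAt (fun p : ℝ => p*t + p*(1 - p)*t^2/2) (t + (1 - 2*p)*t^2/2) p := by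
    have h1 : HasDerivAt (fun p : ℝ => p*t) t p := by simpa using (hasDerivAt_id p).mul_const t
    have h2 : HasDerivAt (fun p : ℝ => p*(1 - p)) (1 - 2*p) p := by
      have := (hasDerivAt_id p).mul ((hasDerivAt_const p (1:ℝ)).sub (hasDerivAt_id p))
      refine this.congr_deriv ?_
      simp only [id_eq, Pi.sub_apply]
      ring
    have h3 := (h2.mul_const (t^2)).div_const 2
    exact h1.add h3
  have hu : HasDerivAt (fun p : ℝ => t + (1 - 2*p)*t^2/2) (-t^2) p := by
    have h2 : HasDerivAt (fun p : ℝ => 1 - 2*p) (-2 : ℝ) p := by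
      have := (hasDerivAt_const p (1:ℝ)).sub ((hasDerivAt_id p).const_mul (2:ℝ))
      refine this.congr_deriv ?_
      ring
    have := (hasDerivAt_const p t).add ((h2.mul_const (t^2)).div_const 2)
    refine this.congr_deriv ?_
    ring
  have := ((hg.exp).mul hu).sub (hasDerivAt_const p (Real.exp t - 1))
  refine this.congr_deriv ?_
  ring

private lemma deriv1_eq (t : ℝ) :
    deriv (fun p : ℝ => Real.exp (p*t + p*(1 - p)*t^2/2) - ((1 - p) + p * Real.exp t))
      = fun p : ℝ => Real.exp (p*t + p*(1 - p)*t^2/2) * (t + (1 - 2*p)*t^2/2)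
        - (Real.exp t - 1) := by
  funext p
  exact (hd1 t p).deriv

private lemma deriv2_eq (t p : ℝ) :
    deriv (deriv (fun p : ℝ =>
        Real.exp (p*t + p*(1 - p)*t^2/2) - ((1 - p) + p * Real.exp t))) p
      = (1/4) * Real.exp (p*t*(2 + t - p*t)/2) * (2*p - 1) * t^3 * ((2*p - 1)*t - 4) := by
  rw [deriv1_eq, (hd2 t p).deriv]
  have h : p*t*(2 + t - p*t)/2 = p*t + p*(1 - p)*t^2/2 := by ring
  rw [h]
  ring

theorem concave_diff (t : ℝ) (ht0 : 0 ≤ t) (ht4 : t < 4) :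
    ConcaveOn ℝ (Set.Icc (1/2 : ℝ) 1)
      (fun p : ℝ => Real.exp (p*t + p*(1 - p)*t^2/2) - ((1 - p) + p * Real.exp t))
    ∧ ∀ p ∈ Set.Icc (1/2 : ℝ) 1,
        deriv (deriv (fun p : ℝ =>
            Real.exp (p*t + p*(1 - p)*t^2/2) - ((1 - p) + p * Real.exp t))) p
          = (1/4) * Real.exp (p*t*(2 + t - p*t)/2) * (2*p - 1) * t^3 * ((2*p - 1)*t - 4)
    ∧ (1/4) * Real.exp (p*t*(2 + t - p*t)/2) * (2*p - 1) * t^3 * ((2*p - 1)*t - 4) ≤ 0 := by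
  have key : ∀ p : ℝ, 1/2 ≤ p → p ≤ 1 →
      (1/4) * Real.exp (p*t*(2 + t - p*t)/2) * (2*p - 1) * t^3 * ((2*p - 1)*t - 4) ≤ 0 := by
    intro p hp1 hp2
    have h1 : (0:ℝ) ≤ 2*p - 1 := by linarith
    have h2 : (2*p - 1)*t - 4 ≤ 0 := by nlinarith
    have h3 : (0:ℝ) ≤ t^3 := by positivity
    have h4 : (0:ℝ) < Real.exp (p*t*(2 + t - p*t)/2) := Real.exp_pos _
    have : 0 ≤ (1/4) * Real.exp (p*t*(2 + t - p*t)/2) * (2*p - 1) * t^3 := by positivity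
    exact mul_nonpos_of_nonneg_of_nonpos this h2
  constructor
  · apply concaveOn_of_deriv2_nonpos (convex_Icc _ _)
    · exact (Continuous.sub (Real.continuous_exp.comp (by continuity)) (by continuity)).continuousOn
    · intro x _; exact (hd1 t x).differentiableAt.differentiableWithinAt
    · intro x _; rw [deriv1_eq]; exact (hd2 t x).differentiableAt.differentiableWithinAt
    · intro x hx
      rw [interior_Icc, Set.mem_Ioo] at hx
      have : deriv^[2] (fun p : ℝ =>
          Real.exp (p*t + p*(1 - p)*t^2/2) - ((1 - p) + p * Real.exp t)) x
          = deriv (deriv (fun p : ℝ =>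
          Real.exp (p*t + p*(1 - p)*t^2/2) - ((1 - p) + p * Real.exp t))) x := by
        simp [Function.iterate_succ]
      rw [this, deriv2_eq]
      exact key x hx.1.le hx.2.le
  · intro p hp
    exact ⟨deriv2_eq t p, key p hp.1 hp.2⟩
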